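/- Let G₁, G₂, G_T be commutative groups of exponent p (prime) and e : G₁ → G₂ → G_T bilinear. Let B, h, g₁ ∈ G₁, g₂, w ∈ G₂ and c, x, y, α, r_x, r_y, r_α, r_δ ∈ ZMod p with s_x = c*x + r_x, s_y = c*y + r_y, s_α = -c*α + r_α, s_δ = -c*α*x + r_δ. If e(g₁, g₂) = e(B, w) * e(B, g₂)^x * e(h, w)^{-α} * e(h, g₂)^{y - α·x}, then e(B,g₂)^{r_x} * e(h,w)^{r_α} * e(h,g₂)^{r_y + r_δ} = e(B,g₂)^{s_x} * e(h,w)^{s_α} * e(h,g₂)^{s_y + s_δ} * (e(B,w) * e(g₁,g₂)^{-1})^c. -/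
import Mathlib


def gpow {p : ℕ} {G : Type*} [CommGroup G] (g : G) (a : ZMod p) : G := g ^ a.val

section aux
variable {p : ℕ} [Fact p.Prime] {G : Type*} [CommGroup G]

lemma pow_mod_eq (g : G) (hg : g ^ p = 1) (n : ℕ) : g ^ n = g ^ (n % p) := by
  conv_lhs => rw [← Nat.div_add_mod n p]
  rw [pow_add, pow_mul, hg, one_pow, one_mul]

lemma gpow_add (g : G) (hg : g ^ p = 1) (a b : ZMod p) :
    gpow g (a + b) = gpow g a * gpow g b := by
  unfold gpow
  rw [← pow_add, ZMod.val_add, ← pow_mod_eq g hg]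

lemma gpow_zero (g : G) : gpow g (0 : ZMod p) = 1 := by
  unfold gpow
  simp [ZMod.val_zero]

lemma gpow_neg (g : G) (hg : g ^ p = 1) (a : ZMod p) :
    gpow g (-a) = (gpow g a)⁻¹ := by
  have := gpow_add g hg (-a) a
  rw [neg_add_cancel, gpow_zero] at this
  exact eq_inv_of_mul_eq_one_left this.symm

lemma gpow_gpow (g : G) (hg : g ^ p = 1) (a b : ZMod p) :
    gpow (gpow g a) b = gpow g (a * b) := by
  unfold gpow
  rw [← pow_mul, ZMod.val_mul, ← pow_mod_eq g hg]

lemma gpow_mul_base (g g' : G) (a : ZMod p) :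
    gpow (g * g') a = gpow g a * gpow g' a := by
  unfold gpow; rw [mul_pow]

end aux

/-- Correctness of the R₄ component of AEE group-signature verification. -/
theorem stmt4 {p : ℕ} [Fact p.Prime]
    {G₁ G₂ GT : Type*} [CommGroup G₁] [CommGroup G₂] [CommGroup GT]
    (hexp₁ : ∀ g : G₁, g ^ p = 1) (hexp₂ : ∀ g : G₂, g ^ p = 1)
    (hexpT : ∀ g : GT, g ^ p = 1)
    (e : G₁ → G₂ → GT)
    (hbil : ∀ (g : G₁) (h : G₂) (a b : ZMod p),
      e (gpow g a) (gpow h b) = gpow (e g h) (a * b))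
    (hmul₁ : ∀ (g g' : G₁) (h : G₂), e (g * g') h = e g h * e g' h)
    (hmul₂ : ∀ (g : G₁) (h h' : G₂), e g (h * h') = e g h * e g h')
    (B h g₁ : G₁) (g₂ w : G₂)
    (c x y α rx ry rα rδ sx sy sα sδ : ZMod p)
    (hsx : sx = c * x + rx) (hsy : sy = c * y + ry)
    (hsα : sα = -c * α + rα) (hsδ : sδ = -c * α * x + rδ)
    (hrel : e g₁ g₂ =
      e B w * gpow (e B g₂) x * gpow (e h w) (-α) * gpow (e h g₂) (y - α * x)) :
    gpow (e B g₂) rx * gpow (e h w) rα * gpow (e h g₂) (ry + rδ) =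
      gpow (e B g₂) sx * gpow (e h w) sα * gpow (e h g₂) (sy + sδ) *
        gpow (e B w * (e g₁ g₂)⁻¹) c := by
  set P := e B g₂ with hP
  set Q := e h w with hQ
  set R := e h g₂ with hR
  have hPp := hexpT P
  have hQp := hexpT Q
  have hRp := hexpT R
  have key : e B w * (e g₁ g₂)⁻¹ = gpow P (-x) * gpow Q α * gpow R (-(y - α * x)) := by
    rw [hrel]
    rw [gpow_neg P hPp, gpow_neg R hRp]
    have hq : gpow Q α = (gpow Q (-α))⁻¹ := by rw [gpow_neg Q hQp, inv_inv]
    rw [hq]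
    rw [mul_inv, mul_inv, mul_inv]
    simp [mul_comm, mul_left_comm, mul_assoc]
  rw [key, gpow_mul_base, gpow_mul_base, gpow_gpow P hPp, gpow_gpow Q hQp,
    gpow_gpow R hRp, hsx, hsy, hsα, hsδ]
  have eP : gpow P (c * x + rx) * gpow P (-x * c) = gpow P rx := by
    rw [← gpow_add P hPp]
    congr 1; ring
  have eQ : gpow Q (-c * α + rα) * gpow Q (α * c) = gpow Q rα := by
    rw [← gpow_add Q hQp]
    congr 1; ring
  have eR : gpow R (c * y + ry + (-c * α * x + rδ)) * gpow R (-(y - α * x) * c) =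
      gpow R (ry + rδ) := by
    rw [← gpow_add R hRp]
    congr 1; ring
  symm
  calc gpow P (c * x + rx) * gpow Q (-c * α + rα) *
        gpow R (c * y + ry + (-c * α * x + rδ)) *
        (gpow P (-x * c) * gpow Q (α * c) * gpow R (-(y - α * x) * c))
      = (gpow P (c * x + rx) * gpow P (-x * c)) * (gpow Q (-c * α + rα) * gpow Q (α * c)) *
        (gpow R (c * y + ry + (-c * α * x + rδ)) * gpow R (-(y - α * x) * c)) := by
        ac_rfl
    _ = gpow P rx * gpow Q rα * gpow R (ry + rδ) := by rw [eP, eQ, eR]
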